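/- Given density operators ρ₁, ρ₂ on a space A and a density operator σ₁ on A ⊗ B with tr_B σ₁ = ρ₁, there exists a density operator σ₂ on A ⊗ B such that tr_B σ₂ = ρ₂ and F(ρ₁, ρ₂) = F(σ₁, σ₂). -/

import Mathlib

open Matrix Kronecker ComplexOrder
noncomputable section

/-- Hilbert–Schmidt inner product (real part): `⟨A,B⟩ = Re tr(Aᴴ B)`. -/
def ip {n : Type*} [Fintype n] (A B : Matrix n n ℂ) : ℝ := ((Aᴴ * B).trace).re

/-- density operator -/
def IsDensity {n : Type*} [Fintype n] [DecidableEq n] (ρ : Matrix n n ℂ) : Prop :=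
  ρ.PosSemidef ∧ ρ.trace = 1

/-- the square root `Matrix.PosSemidef.sqrt` of the older Mathlib, spelled out -/
def posSemidefSqrt {n : Type*} [Fintype n] [DecidableEq n] {A : Matrix n n ℂ}
    (hA : A.PosSemidef) : Matrix n n ℂ :=
  (hA.1.eigenvectorUnitary : Matrix n n ℂ) * diagonal ((↑) ∘ (√·) ∘ hA.1.eigenvalues) *
    (star (hA.1.eigenvectorUnitary : Matrix n n ℂ))

/-- trace norm `‖A‖₁ = tr √(AᴴA)` -/
def traceNorm {n : Type*} [Fintype n] [DecidableEq n] (A : Matrix n n ℂ) : ℝ :=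
  (posSemidefSqrt (Matrix.posSemidef_conjTranspose_mul_self A)).trace.re

open Classical in
/-- square root of a positive semidefinite matrix (junk value `0` otherwise) -/
def msqrt {n : Type*} [Fintype n] [DecidableEq n] (A : Matrix n n ℂ) : Matrix n n ℂ :=
  if h : A.PosSemidef then posSemidefSqrt h else 0

/-- fidelity `F(P,Q) = ‖√P √Q‖₁` -/
def fidelity {n : Type*} [Fintype n] [DecidableEq n] (P Q : Matrix n n ℂ) : ℝ :=
  traceNorm (msqrt P * msqrt Q)

/-- partial trace over the second tensor factor -/
def ptraceRight {n m : Type*} [Fintype m] (M : Matrix (n × m) (n × m) ℂ) :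
    Matrix n n ℂ := Matrix.of fun i j => ∑ k, M (i, k) (j, k)

/-- partial trace over the first tensor factor -/
def ptraceLeft {n m : Type*} [Fintype n] (M : Matrix (n × m) (n × m) ℂ) :
    Matrix m m ℂ := Matrix.of fun i j => ∑ k, M (k, i) (k, j)

/-- `0 ≤ Π ≤ I` -/
def Meas {n : Type*} [Fintype n] [DecidableEq n] (P : Matrix n n ℂ) : Prop :=
  P.PosSemidef ∧ (1 - P).PosSemidef


section SqrtPort
open scoped MatrixOrder

lemma posSemidefSqrt_eq_cfc {n : Type*} [Fintype n] [DecidableEq n] {A : Matrix n n ℂ}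
    (hA : A.PosSemidef) : posSemidefSqrt hA = CFC.sqrt A := by
  rw [CFC.sqrt_eq_cfc, cfc_nnreal_eq_real _ A, hA.1.cfc_eq]
  simp only [IsHermitian.cfc, posSemidefSqrt, Real.coe_sqrt, Real.coe_toNNReal']
  rw [Unitary.conjStarAlgAut_apply]
  congr 3
  funext i
  simp [max_eq_left (hA.eigenvalues_nonneg i)]

lemma Matrix.PosSemidef.posSemidef_sqrt {n : Type*} [Fintype n] [DecidableEq n]
    {A : Matrix n n ℂ} (hA : A.PosSemidef) : (posSemidefSqrt hA).PosSemidef := by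
  rw [posSemidefSqrt_eq_cfc]; exact (CFC.sqrt_nonneg A).posSemidef

lemma Matrix.PosSemidef.sqrt_mul_self {n : Type*} [Fintype n] [DecidableEq n]
    {A : Matrix n n ℂ} (hA : A.PosSemidef) : posSemidefSqrt hA * posSemidefSqrt hA = A := by
  rw [posSemidefSqrt_eq_cfc]; exact CFC.sqrt_mul_sqrt_self A hA.nonneg

lemma Matrix.PosSemidef.eq_sqrt_of_sq_eq {n : Type*} [Fintype n] [DecidableEq n]
    {B : Matrix n n ℂ} (hB : B.PosSemidef) {A : Matrix n n ℂ} (hA : A.PosSemidef)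
    (h : B ^ 2 = A) : B = posSemidefSqrt hA := by
  rw [posSemidefSqrt_eq_cfc]
  exact (CFC.sqrt_unique (by rw [← sq]; exact h) hB.nonneg).symm

end SqrtPort

namespace Stmt5Aux
set_option linter.unusedSectionVars false
set_option maxHeartbeats 4000000
variable {k : Type*} [Fintype k] [DecidableEq k] {N M : Type*} [Fintype N] [Fintype M] [DecidableEq N] [DecidableEq M]





lemma dot_self_real (u : k → ℂ) : star u ⬝ᵥ u = ((∑ i, Complex.normSq (u i) : ℝ) : ℂ) := by
  simp only [dotProduct, Pi.star_apply, Complex.ofReal_sum]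
  congr 1 with i
  rw [Complex.normSq_eq_conj_mul_self]
  rfl

lemma dot_self_re_nonneg (u : k → ℂ) : 0 ≤ (star u ⬝ᵥ u).re := by
  rw [dot_self_real]
  simpa using Finset.sum_nonneg fun i _ => Complex.normSq_nonneg (u i)

lemma dot_mulVec_mulVec (K L : Matrix k k ℂ) (u w : k → ℂ) :
    star (K *ᵥ u) ⬝ᵥ (L *ᵥ w) = star u ⬝ᵥ ((Kᴴ * L) *ᵥ w) := by
  rw [star_mulVec, dotProduct_mulVec, vecMul_vecMul, ← dotProduct_mulVec]

lemma re_dot_mono {A B : Matrix k k ℂ} (h : (B - A).PosSemidef) (v : k → ℂ) :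
    (star v ⬝ᵥ A *ᵥ v).re ≤ (star v ⬝ᵥ B *ᵥ v).re := by
  have := h.re_dotProduct_nonneg v
  rw [sub_mulVec, dotProduct_sub] at this
  simp only [RCLike.re_to_complex, Complex.sub_re] at this
  linarith

lemma re_dot_le_of_psd_sub {A : Matrix k k ℂ} (h : (1 - A).PosSemidef) (v : k → ℂ) :
    (star v ⬝ᵥ A *ᵥ v).re ≤ (star v ⬝ᵥ v).re := by
  simpa using re_dot_mono h v

lemma two_re_dot_le (c d : k → ℂ) :
    2 * (star c ⬝ᵥ d).re ≤ (star c ⬝ᵥ c).re + (star d ⬝ᵥ d).re := by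
  have h0 : 0 ≤ (star (c - d) ⬝ᵥ (c - d)).re := dot_self_re_nonneg _
  have hexp : star (c - d) ⬝ᵥ (c - d)
      = star c ⬝ᵥ c - star c ⬝ᵥ d - star d ⬝ᵥ c + star d ⬝ᵥ d := by
    simp only [star_sub, sub_dotProduct, dotProduct_sub]
    ring
  have hsym : (star d ⬝ᵥ c).re = (star c ⬝ᵥ d).re := by
    have : star d ⬝ᵥ c = star (star c ⬝ᵥ d) := by
      rw [star_dotProduct]
    rw [this, Complex.star_def, Complex.conj_re]
  rw [hexp] at h0
  simp only [Complex.add_re, Complex.sub_re] at h0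
  linarith

/-- trace of a PSD matrix written via its sqrt columns -/
lemma psd_diag_eq (hP : (P : Matrix k k ℂ).PosSemidef) (i : k) :
    P i i = star (fun a => (posSemidefSqrt hP) a i) ⬝ᵥ (fun a => (posSemidefSqrt hP) a i) := by
  set S := (posSemidefSqrt hP) with hS
  have hherm : Sᴴ = S := hP.posSemidef_sqrt.1
  have hmul : S * S = P := hP.sqrt_mul_self
  rw [← hmul]
  simp only [Matrix.mul_apply, dotProduct, Pi.star_apply]
  congr 1 with a
  have : S i a = star (S a i) := by
    conv_lhs => rw [← hherm]
    rfl
  rw [this]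

lemma psd_trace_re_nonneg {P : Matrix k k ℂ} (hP : P.PosSemidef) : 0 ≤ P.trace.re := by
  rw [Matrix.trace]
  simp only [Complex.re_sum, diag]
  refine Finset.sum_nonneg fun i _ => ?_
  rw [psd_diag_eq hP i]
  exact dot_self_re_nonneg _

lemma psd_trace_re_zero {P : Matrix k k ℂ} (hP : P.PosSemidef) (h : P.trace.re = 0) :
    P = 0 := by
  set S := (posSemidefSqrt hP) with hS
  have hmul : S * S = P := hP.sqrt_mul_self
  suffices hs0 : S = 0 by rw [← hmul, hs0, Matrix.zero_mul]
  have hsum : ∑ i, ∑ a, Complex.normSq (S a i) = 0 := by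
    have : P.trace.re = ∑ i, ∑ a, Complex.normSq (S a i) := by
      rw [Matrix.trace]
      simp only [Complex.re_sum, diag]
      congr 1 with i
      rw [psd_diag_eq hP i, dot_self_real]
      simp [hS]
    rw [← this, h]
  ext a i
  have h1 : ∀ i ∈ Finset.univ, (0:ℝ) ≤ ∑ a, Complex.normSq (S a i) :=
    fun i _ => Finset.sum_nonneg fun a _ => Complex.normSq_nonneg _
  have h2 := (Finset.sum_eq_zero_iff_of_nonneg h1).mp hsum i (Finset.mem_univ i)
  have h3 : ∀ a ∈ Finset.univ, (0:ℝ) ≤ Complex.normSq (S a i) :=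
    fun a _ => Complex.normSq_nonneg _
  have h4 := (Finset.sum_eq_zero_iff_of_nonneg h3).mp h2 a (Finset.mem_univ a)
  simpa using Complex.normSq_eq_zero.mp h4

lemma sqrt_congr {A B : Matrix k k ℂ} (hA : A.PosSemidef) (hB : B.PosSemidef) (h : A = B) :
    (posSemidefSqrt hA) = (posSemidefSqrt hB) := by subst h; rfl

/-- contraction times PSD trace bound -/
lemma re_trace_contraction_mul {K P : Matrix k k ℂ} (hP : P.PosSemidef)
    (hK : ∀ u : k → ℂ, (star (K *ᵥ u) ⬝ᵥ (K *ᵥ u)).re ≤ (star u ⬝ᵥ u).re) :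
    ((K * P).trace).re ≤ P.trace.re := by
  set S := (posSemidefSqrt hP) with hS
  have hherm : Sᴴ = S := hP.posSemidef_sqrt.1
  have hmul : S * S = P := hP.sqrt_mul_self
  have h1 : (K * P).trace = (S * (K * S)).trace := by
    rw [← hmul, ← Matrix.mul_assoc, Matrix.trace_mul_comm (K * S) S]
  rw [h1, Matrix.trace, Matrix.trace]
  simp only [Complex.re_sum, diag]
  refine Finset.sum_le_sum fun i _ => ?_
  set c : k → ℂ := fun a => S a i with hc
  have hentry : (S * (K * S)) i i = star c ⬝ᵥ (K *ᵥ c) := by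
    simp only [Matrix.mul_apply, dotProduct, Pi.star_apply, mulVec, dotProduct]
    congr 1 with a
    have hsa : S i a = star (c a) := by
      simp only [hc]
      conv_lhs => rw [← hherm]
      rfl
    rw [hsa]
  have hPii : P i i = star c ⬝ᵥ c := psd_diag_eq hP i
  rw [hentry, hPii]
  have := two_re_dot_le c (K *ᵥ c)
  have := hK c
  linarith






lemma conj_mul_conj {V X Y : Matrix k k ℂ} (hV : star V * V = 1) :
    (V * X * star V) * (V * Y * star V) = V * (X * Y) * star V := by
  have h : X * (star V * V) * Y = X * Y := by rw [hV, Matrix.mul_one]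
  calc (V * X * star V) * (V * Y * star V) = V * (X * (star V * V) * Y) * star V := by
        simp only [Matrix.mul_assoc]
    _ = V * (X * Y) * star V := by rw [h]

lemma conj_herm {V X : Matrix k k ℂ} (hX : Xᴴ = X) : (V * X * star V)ᴴ = V * X * star V := by
  simp only [Matrix.conjTranspose_mul, Matrix.star_eq_conjTranspose,
    Matrix.conjTranspose_conjTranspose, hX, Matrix.mul_assoc]

lemma diag_herm {c : k → ℂ} (hc : star c = c) : (diagonal c)ᴴ = diagonal c := by
  rw [diagonal_conjTranspose, hc]

/-- polar decomposition (partial isometry form) -/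
lemma polar_decomp (A : Matrix k k ℂ) :
    ∃ U : Matrix k k ℂ,
      A = U * (posSemidefSqrt (posSemidef_conjTranspose_mul_self A)) ∧
      Uᴴ * U * (posSemidefSqrt (posSemidef_conjTranspose_mul_self A))
        = (posSemidefSqrt (posSemidef_conjTranspose_mul_self A)) ∧
      (1 - Uᴴ * U).PosSemidef ∧ (1 - U * Uᴴ).PosSemidef := by
  set hH := posSemidef_conjTranspose_mul_self A with hHdef
  have h := hH.1
  set V : Matrix k k ℂ := (h.eigenvectorUnitary : Matrix k k ℂ) with hVdef
  have hV : star V * V = 1 := mem_unitaryGroup_iff'.mp h.eigenvectorUnitary.2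
  have hV' : V * star V = 1 := mem_unitaryGroup_iff.mp h.eigenvectorUnitary.2
  set ev := h.eigenvalues with hev
  have hevnn : ∀ i, 0 ≤ ev i := fun i => hH.eigenvalues_nonneg i
  set s : k → ℂ := fun i => ((Real.sqrt (ev i) : ℝ) : ℂ) with hs
  set gs : k → ℂ := fun i => if ev i = 0 then 0 else (s i)⁻¹ with hgs
  set e : k → ℂ := fun i => if ev i = 0 then 0 else 1 with he
  set ec : k → ℂ := fun i => 1 - e i with hec
  set C : (k → ℂ) → Matrix k k ℂ := fun c => V * diagonal c * star V with hC
  have key : ∀ c d : k → ℂ, C c * C d = C (fun i => c i * d i) := by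
    intro c d
    simp only [hC]
    rw [conj_mul_conj hV, diagonal_mul_diagonal]
  have hspec : Aᴴ * A = C (RCLike.ofReal ∘ ev) := h.spectral_theorem
  have hsqrt : (posSemidefSqrt hH) = C ((↑) ∘ Real.sqrt ∘ ev) := rfl
  have hCs : C ((↑) ∘ Real.sqrt ∘ ev) = C s := rfl
  have hsne : ∀ i, ev i ≠ 0 → s i ≠ 0 := by
    intro i h0
    simp only [hs]
    have : Real.sqrt (ev i) ≠ 0 :=
      Real.sqrt_ne_zero'.mpr (lt_of_le_of_ne (hevnn i) (Ne.symm h0))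
    simpa using this
  have hCherm : ∀ c : k → ℂ, star c = c → (C c)ᴴ = C c := by
    intro c hc
    exact conj_herm (diag_herm hc)
  have hgs_star : star gs = gs := by
    funext i
    simp only [hgs, hs, Pi.star_apply]
    split <;> simp
  have hec_star : star ec = ec := by
    funext i
    simp only [hec, he, Pi.star_apply]
    split <;> simp
  have he_star : star e = e := by
    funext i
    simp only [he, Pi.star_apply]
    split <;> simp
  -- N := A * C ec is zero
  have hN : A * C ec = 0 := by
    rw [← Matrix.conjTranspose_mul_self_eq_zero]
    have h1 : (A * C ec)ᴴ * (A * C ec) = C ec * (Aᴴ * A) * C ec := by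
      rw [Matrix.conjTranspose_mul, hCherm ec hec_star]
      simp only [Matrix.mul_assoc]
    rw [h1, hspec]
    have h2 : C ec * C (RCLike.ofReal ∘ ev) * C ec
        = C (fun i => ec i * (ev i : ℂ) * ec i) := by
      rw [key, key]
      congr 1
    rw [h2]
    have h3 : (fun i => ec i * (ev i : ℂ) * ec i) = fun _ => (0:ℂ) := by
      funext i
      simp only [hec, he]
      split_ifs with h0
      · simp [h0]
      · simp
    rw [h3]
    simp [hC]
  have hCe_add : C e + C ec = 1 := by
    simp only [hC]
    rw [← Matrix.add_mul, ← Matrix.mul_add, diagonal_add]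
    have : (fun i => e i + ec i) = fun _ => (1:ℂ) := by funext i; simp [hec]
    rw [this, diagonal_one, Matrix.mul_one, hV']
  have hAe : A * C e = A := by
    have : A * (C e + C ec) = A := by rw [hCe_add, Matrix.mul_one]
    rw [Matrix.mul_add, hN, add_zero] at this
    exact this
  set U := A * C gs with hU
  have hUH : Uᴴ = C gs * Aᴴ := by
    rw [hU, Matrix.conjTranspose_mul, hCherm gs hgs_star]
  have hgs_s : (fun i => gs i * s i) = e := by
    funext i
    simp only [hgs, he]
    split_ifs with h0
    · simp
    · rw [inv_mul_cancel₀ (hsne i h0)]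
  have hUR : U * (posSemidefSqrt hH) = A := by
    rw [hsqrt, hCs, hU, Matrix.mul_assoc, key, hgs_s]
    exact hAe
  have hgs_ev_gs : (fun i => gs i * ((RCLike.ofReal ∘ ev) i) * gs i) = e := by
    funext i
    simp only [hgs, he, Function.comp]
    split_ifs with h0
    · simp
    · have hsq : s i * s i = (ev i : ℂ) := by
        simp only [hs]
        rw [← Complex.ofReal_mul, Real.mul_self_sqrt (hevnn i)]
      have hs0 := hsne i h0
      show (s i)⁻¹ * ((ev i : ℝ) : ℂ) * (s i)⁻¹ = 1
      rw [← hsq]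
      field_simp
  have hQ : Uᴴ * U = C e := by
    rw [hUH, hU]
    calc C gs * Aᴴ * (A * C gs) = C gs * (Aᴴ * A) * C gs := by
          simp only [Matrix.mul_assoc]
      _ = C gs * C (RCLike.ofReal ∘ ev) * C gs := by rw [hspec]
      _ = C (fun i => gs i * ((RCLike.ofReal ∘ ev) i) * gs i) := by rw [key, key]
      _ = C e := by rw [hgs_ev_gs]
  have he_s : (fun i => e i * s i) = s := by
    funext i
    simp only [he]
    split_ifs with h0
    · simp [hs, h0]
    · simp
  have hQR : Uᴴ * U * (posSemidefSqrt hH) = (posSemidefSqrt hH) := by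
    rw [hQ, hsqrt, hCs, key, he_s]
  have hgs_e : (fun i => gs i * e i) = gs := by
    funext i
    simp only [hgs, he]
    split_ifs with h0 <;> simp
  have hUQ : U * (Uᴴ * U) = U := by
    rw [hQ, hU, Matrix.mul_assoc, key, hgs_e]
  refine ⟨U, hUR.symm, hQR, ?_, ?_⟩
  · -- 1 - UᴴU = C (1 - e) is PSD
    rw [hQ]
    have h1 : (1 : Matrix k k ℂ) = C (fun _ => 1) := by
      simp only [hC]
      rw [diagonal_one, Matrix.mul_one, hV']
    have : (1 : Matrix k k ℂ) - C e = C ec := by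
      rw [h1]
      simp only [hC]
      rw [← Matrix.sub_mul, ← Matrix.mul_sub, ← diagonal_sub]
    rw [this]
    simp only [hC, Matrix.star_eq_conjTranspose]
    refine PosSemidef.mul_mul_conjTranspose_same ?_ V
    refine posSemidef_diagonal_iff.mpr fun i => ?_
    simp only [hec, he]
    split_ifs with h0 <;> simp
  · -- 1 - UUᴴ is a hermitian idempotent
    set Q2 := U * Uᴴ with hQ2
    have hQ2herm : Q2ᴴ = Q2 := by
      rw [hQ2, Matrix.conjTranspose_mul, Matrix.conjTranspose_conjTranspose]
    have hQ2idem : Q2 * Q2 = Q2 := by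
      calc Q2 * Q2 = U * (Uᴴ * U) * Uᴴ := by simp only [hQ2, Matrix.mul_assoc]
        _ = U * Uᴴ := by rw [hUQ]
    have hherm : (1 - Q2)ᴴ = 1 - Q2 := by
      rw [Matrix.conjTranspose_sub, hQ2herm, Matrix.conjTranspose_one]
    have hsq : (1 - Q2)ᴴ * (1 - Q2) = 1 - Q2 := by
      rw [hherm]
      rw [Matrix.mul_sub, Matrix.mul_one, Matrix.sub_mul, Matrix.one_mul, hQ2idem]
      abel
    rw [← hsq]
    exact posSemidef_conjTranspose_mul_self _






/-- pseudo-inverse package for a PSD matrix -/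
lemma exists_pinv {B : Matrix k k ℂ} (hB : B.PosSemidef) :
    ∃ Bp Pr : Matrix k k ℂ, Bpᴴ = Bp ∧ Bp * B = Pr ∧ B * Bp = Pr ∧ Pr * B = B ∧
      Prᴴ = Pr ∧ Pr * Pr = Pr ∧ (1 - Pr).PosSemidef := by
  have h := hB.1
  set V : Matrix k k ℂ := (h.eigenvectorUnitary : Matrix k k ℂ) with hVdef
  have hV : star V * V = 1 := mem_unitaryGroup_iff'.mp h.eigenvectorUnitary.2
  have hV' : V * star V = 1 := mem_unitaryGroup_iff.mp h.eigenvectorUnitary.2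
  set ev := h.eigenvalues with hev
  set g : k → ℂ := fun i => if ev i = 0 then 0 else (RCLike.ofReal (ev i) : ℂ)⁻¹ with hg
  set e : k → ℂ := fun i => if ev i = 0 then 0 else 1 with he
  set C : (k → ℂ) → Matrix k k ℂ := fun c => V * diagonal c * star V with hC
  have key : ∀ c d : k → ℂ, C c * C d = C (fun i => c i * d i) := by
    intro c d
    simp only [hC]
    rw [conj_mul_conj hV, diagonal_mul_diagonal]
  have hspec : B = C (RCLike.ofReal ∘ ev) := h.spectral_theorem
  have hfun1 : (fun i => g i * ((RCLike.ofReal ∘ ev) i : ℂ)) = e := by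
    funext i
    simp only [hg, he, Function.comp]
    split_ifs with h0
    · simp
    · rw [inv_mul_cancel₀ (by simpa using h0)]
  have hfun2 : (fun i => ((RCLike.ofReal ∘ ev) i : ℂ) * g i) = e := by
    funext i
    simp only [hg, he, Function.comp]
    split_ifs with h0
    · simp [h0]
    · rw [mul_inv_cancel₀ (by simpa using h0)]
  have hfun3 : (fun i => e i * ((RCLike.ofReal ∘ ev) i : ℂ)) = (RCLike.ofReal ∘ ev) := by
    funext i
    simp only [he, Function.comp]
    split_ifs with h0
    · simp [h0]
    · simp
  have hfun4 : (fun i => e i * e i) = e := by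
    funext i
    simp only [he]
    split_ifs <;> simp
  refine ⟨C g, C e, ?_, ?_, ?_, ?_, ?_, ?_, ?_⟩
  · refine conj_herm (diag_herm ?_)
    funext i
    simp only [hg, Pi.star_apply]
    split_ifs <;> simp
  · rw [hspec, key, hfun1]
  · rw [hspec, key, hfun2]
  · rw [hspec, key, hfun3]
  · refine conj_herm (diag_herm ?_)
    funext i
    simp only [he, Pi.star_apply]
    split_ifs <;> simp
  · rw [key, hfun4]
  · have h1 : (1 : Matrix k k ℂ) = C (fun _ => 1) := by
      simp only [hC]
      rw [diagonal_one, Matrix.mul_one, hV']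
    have h2 : (1 : Matrix k k ℂ) - C e = C (fun i => 1 - e i) := by
      rw [h1]
      simp only [hC]
      rw [← Matrix.sub_mul, ← Matrix.mul_sub, diagonal_sub]
    rw [h2]
    simp only [hC, Matrix.star_eq_conjTranspose]
    refine PosSemidef.mul_mul_conjTranspose_same ?_ V
    refine posSemidef_diagonal_iff.mpr fun i => ?_
    simp only [he]
    split_ifs <;> simp






/-- pointwise contraction property from `1 - KᴴK ⪰ 0` -/
lemma contraction_pointwise {K : Matrix k k ℂ} (h : (1 - Kᴴ * K).PosSemidef) :
    ∀ u : k → ℂ, (star (K *ᵥ u) ⬝ᵥ (K *ᵥ u)).re ≤ (star u ⬝ᵥ u).re := by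
  intro u
  rw [dot_mulVec_mulVec]
  exact re_dot_le_of_psd_sub h u

/-- `tr √(TᴴT) = tr √(TTᴴ)` -/
lemma trace_sqrt_comm (T : Matrix k k ℂ) :
    (posSemidefSqrt (posSemidef_conjTranspose_mul_self T)).trace
      = (posSemidefSqrt (posSemidef_self_mul_conjTranspose T)).trace := by
  obtain ⟨U, hU1, hU2, hU3, hU4⟩ := polar_decomp T
  set R := (posSemidefSqrt (posSemidef_conjTranspose_mul_self T)) with hR
  have hRpsd : R.PosSemidef := (posSemidef_conjTranspose_mul_self T).posSemidef_sqrt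
  have hRherm : Rᴴ = R := hRpsd.1
  have hsq : (U * R * Uᴴ) ^ 2 = T * Tᴴ := by
    rw [pow_two]
    calc U * R * Uᴴ * (U * R * Uᴴ) = U * (R * (Uᴴ * U * R)) * Uᴴ := by
          simp only [Matrix.mul_assoc]
      _ = U * (R * R) * Uᴴ := by rw [hU2]
      _ = T * Tᴴ := by
          conv_rhs => rw [hU1]
          rw [Matrix.conjTranspose_mul, hRherm]
          simp only [Matrix.mul_assoc]
  have hpsd : (U * R * Uᴴ).PosSemidef := hRpsd.mul_mul_conjTranspose_same U
  have heq : U * R * Uᴴ = (posSemidefSqrt (posSemidef_self_mul_conjTranspose T)) :=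
    hpsd.eq_sqrt_of_sq_eq _ hsq
  rw [← heq]
  rw [Matrix.trace_mul_cycle]
  rw [hU2]

/-- `Re tr M ≤ ‖M‖₁` -/
lemma re_trace_le_traceNorm (M : Matrix k k ℂ) : M.trace.re ≤ traceNorm M := by
  obtain ⟨U, hU1, hU2, hU3, hU4⟩ := polar_decomp M
  set R := (posSemidefSqrt (posSemidef_conjTranspose_mul_self M)) with hR
  have hRpsd : R.PosSemidef := (posSemidef_conjTranspose_mul_self M).posSemidef_sqrt
  have : M.trace = (U * R).trace := by rw [← hU1]
  rw [this]
  exact re_trace_contraction_mul hRpsd (contraction_pointwise hU3)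

/-- operator monotonicity of the matrix square root -/
lemma sqrt_mono {A B : Matrix k k ℂ} (hA : A.PosSemidef) (hB : B.PosSemidef)
    (hAB : (B - A).PosSemidef) : ((posSemidefSqrt hB) - (posSemidefSqrt hA)).PosSemidef := by
  set SA := (posSemidefSqrt hA) with hSA
  set SB := (posSemidefSqrt hB) with hSB
  have hSApsd : SA.PosSemidef := hA.posSemidef_sqrt
  have hSBpsd : SB.PosSemidef := hB.posSemidef_sqrt
  have hD : (SB - SA).IsHermitian := hSBpsd.1.sub hSApsd.1
  refine hD.posSemidef_iff_eigenvalues_nonneg.mpr fun i => show (0:ℝ) ≤ hD.eigenvalues i from ?_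
  set t := hD.eigenvalues i with ht
  set v : k → ℂ := (WithLp.equiv 2 _) (hD.eigenvectorBasis i) with hv
  have hv0 : v ≠ 0 := by
    intro h0
    exact hD.eigenvectorBasis.orthonormal.ne_zero i ((WithLp.equiv 2 _).injective h0)
  have heig : (SB - SA) *ᵥ v = t • v := hD.mulVec_eigenvectorBasis i
  -- identity : B - A = SB * (SB - SA) + (SB - SA) * SA
  have hident : B - A = SB * (SB - SA) + (SB - SA) * SA := by
    rw [Matrix.mul_sub, Matrix.sub_mul, hB.sqrt_mul_self, hA.sqrt_mul_self]
    abel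
  set qB := star v ⬝ᵥ SB *ᵥ v with hqB
  set qA := star v ⬝ᵥ SA *ᵥ v with hqA
  have hqBnn : 0 ≤ qB := hSBpsd.dotProduct_mulVec_nonneg v
  have hqAnn : 0 ≤ qA := hSApsd.dotProduct_mulVec_nonneg v
  have hmain : star v ⬝ᵥ (B - A) *ᵥ v = (t : ℂ) * (qB + qA) := by
    rw [hident, add_mulVec, dotProduct_add]
    have h1 : star v ⬝ᵥ (SB * (SB - SA)) *ᵥ v = (t:ℂ) * qB := by
      rw [← mulVec_mulVec, heig, mulVec_smul, dotProduct_smul]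
      rw [Complex.real_smul]
    have h2 : star v ⬝ᵥ ((SB - SA) * SA) *ᵥ v = (t:ℂ) * qA := by
      rw [← mulVec_mulVec, dotProduct_mulVec]
      have : star v ᵥ* (SB - SA) = star ((SB - SA) *ᵥ v) := by
        rw [star_mulVec, hD.eq]
      rw [this, heig, star_smul, smul_dotProduct]
      simp only [star_trivial, RCLike.real_smul_eq_coe_mul]
      rfl
    rw [h1, h2]
    ring
  have hge : 0 ≤ star v ⬝ᵥ (B - A) *ᵥ v := hAB.dotProduct_mulVec_nonneg v
  by_cases hs : qB + qA = 0
  · -- then SB v = SA v = 0 hence t • v = 0 hence t = 0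
    have hqB0 : qB = 0 := by
      have h1 : qB ≤ 0 := by
        calc qB = (qB + qA) - qA := by ring
          _ ≤ 0 - 0 := by
              apply sub_le_sub
              · rw [hs]
              · exact hqAnn
          _ = 0 := by ring
      exact le_antisymm h1 hqBnn
    have hqA0 : qA = 0 := by
      rw [hqB0, zero_add] at hs
      exact hs
    have hSBv : SB *ᵥ v = 0 := (hSBpsd.dotProduct_mulVec_zero_iff v).mp hqB0
    have hSAv : SA *ᵥ v = 0 := (hSApsd.dotProduct_mulVec_zero_iff v).mp hqA0
    have : t • v = 0 := by
      rw [← heig, sub_mulVec, hSBv, hSAv, sub_zero]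
    rcases smul_eq_zero.mp this with h | h
    · rw [h]
    · exact absurd h hv0
  · -- qB + qA has positive real part
    have hsum_nn : 0 ≤ qB + qA := add_nonneg hqBnn hqAnn
    have him : (qB + qA).im = 0 := by
      rw [Complex.nonneg_iff] at hsum_nn
      exact hsum_nn.2.symm
    have hre_nn : 0 ≤ (qB + qA).re := by
      rw [Complex.nonneg_iff] at hsum_nn
      exact hsum_nn.1
    have hre_pos : 0 < (qB + qA).re := by
      rcases lt_or_eq_of_le hre_nn with h | h
      · exact h
      · exfalso
        apply hs
        apply Complex.ext
        · exact h.symm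
        · exact him
    have h0 : 0 ≤ ((t:ℂ) * (qB + qA)).re := by
      rw [← hmain]
      rw [Complex.nonneg_iff] at hge
      exact hge.1
    have : ((t:ℂ) * (qB + qA)).re = t * (qB + qA).re := by
      simp [Complex.mul_re]
    rw [this] at h0
    nlinarith [h0, hre_pos]

lemma trace_sqrt_le {A B : Matrix k k ℂ} (hA : A.PosSemidef) (hB : B.PosSemidef)
    (hAB : (B - A).PosSemidef) : (posSemidefSqrt hA).trace.re ≤ (posSemidefSqrt hB).trace.re := by
  have := psd_trace_re_nonneg (sqrt_mono hA hB hAB)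
  rw [Matrix.trace_sub, Complex.sub_re] at this
  linarith






def emb (v : N → ℂ) (k0 : M) : N × M → ℂ := fun p => if p.2 = k0 then v p.1 else 0

lemma ptraceRight_apply (A : Matrix (N × M) (N × M) ℂ) (i j : N) :
    ptraceRight A i j = ∑ k0, A (i, k0) (j, k0) := rfl

lemma dot_emb (A : Matrix (N × M) (N × M) ℂ) (v w : N → ℂ) :
    ∑ k0 : M, star (emb v k0) ⬝ᵥ A *ᵥ emb w k0 = star v ⬝ᵥ (ptraceRight A) *ᵥ w := by
  have lhs_eq : ∀ k0 : M, star (emb v k0) ⬝ᵥ A *ᵥ emb w k0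
      = ∑ a, ∑ c, star (v a) * A (a, k0) (c, k0) * w c := by
    intro k0
    rw [dotProduct]
    rw [Fintype.sum_prod_type]
    have : ∀ (a : N) (b : M), star (emb v k0) (a, b) * (A *ᵥ emb w k0) (a, b)
        = (if b = k0 then star (v a) * (A *ᵥ emb w k0) (a, b) else 0) := by
      intro a b
      simp only [emb, Pi.star_apply]
      split_ifs <;> simp
    simp_rw [this]
    simp only [Finset.sum_ite_eq', Finset.mem_univ, if_true]
    refine Finset.sum_congr rfl fun a _ => ?_
    rw [mulVec, dotProduct, Fintype.sum_prod_type]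
    have h2 : ∀ (c : N) (d : M), A (a, k0) (c, d) * emb w k0 (c, d)
        = (if d = k0 then A (a, k0) (c, d) * w c else 0) := by
      intro c d
      simp only [emb]
      split_ifs <;> simp
    simp_rw [h2]
    simp only [Finset.sum_ite_eq', Finset.mem_univ, if_true]
    rw [Finset.mul_sum]
    refine Finset.sum_congr rfl fun c _ => ?_
    ring
  simp_rw [lhs_eq]
  rw [dotProduct]
  rw [Finset.sum_comm]
  refine Finset.sum_congr rfl fun a _ => ?_
  rw [mulVec, ptraceRight]
  simp only [Pi.star_apply, of_apply, dotProduct]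
  rw [Finset.mul_sum, Finset.sum_comm]
  refine Finset.sum_congr rfl fun c _ => ?_
  rw [Finset.sum_mul, Finset.mul_sum]
  refine Finset.sum_congr rfl fun k0 _ => ?_
  ring

lemma ptraceRight_psd {A : Matrix (N × M) (N × M) ℂ} (hA : A.PosSemidef) :
    (ptraceRight A).PosSemidef := by
  refine posSemidef_iff_dotProduct_mulVec.mpr ⟨?_, ?_⟩
  · rw [Matrix.IsHermitian]
    ext i j
    simp only [conjTranspose_apply, ptraceRight_apply, star_sum]
    refine Finset.sum_congr rfl fun k0 _ => ?_
    have := congrFun (congrFun hA.1 (i, k0)) (j, k0)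
    rw [← this]
    rfl
  · intro x
    have := dot_emb A x x
    rw [← this]
    exact Finset.sum_nonneg fun k0 _ => hA.dotProduct_mulVec_nonneg (emb x k0)

lemma ptraceRight_trace (A : Matrix (N × M) (N × M) ℂ) :
    (ptraceRight A).trace = A.trace := by
  rw [Matrix.trace, Matrix.trace, Fintype.sum_prod_type]
  rfl

lemma ptraceRight_add (A B : Matrix (N × M) (N × M) ℂ) :
    ptraceRight (A + B) = ptraceRight A + ptraceRight B := by
  ext i j
  simp [ptraceRight_apply, Finset.sum_add_distrib]

lemma ptraceRight_sub (A B : Matrix (N × M) (N × M) ℂ) :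
    ptraceRight (A - B) = ptraceRight A - ptraceRight B := by
  ext i j
  simp [ptraceRight_apply, Finset.sum_sub_distrib]

lemma ptraceRight_kron_left (X : Matrix N N ℂ) (A : Matrix (N × M) (N × M) ℂ) :
    ptraceRight ((X ⊗ₖ (1 : Matrix M M ℂ)) * A) = X * ptraceRight A := by
  ext i j
  simp only [ptraceRight_apply, Matrix.mul_apply, kroneckerMap_apply, Fintype.sum_prod_type]
  have h : ∀ (k0 : M) (a : N) (b : M), (X i a * (1:Matrix M M ℂ) k0 b) * A (a,b) (j,k0)
      = if b = k0 then X i a * A (a,b) (j,k0) else 0 := by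
    intro k0 a b
    by_cases hb : b = k0
    · subst hb; simp [Matrix.one_apply]
    · simp [Matrix.one_apply, Ne.symm hb, hb]
  simp_rw [h]
  simp only [Finset.sum_ite_eq', Finset.mem_univ, if_true]
  rw [Finset.sum_comm]
  refine Finset.sum_congr rfl fun a _ => ?_
  rw [Finset.mul_sum]

lemma ptraceRight_kron_right (X : Matrix N N ℂ) (A : Matrix (N × M) (N × M) ℂ) :
    ptraceRight (A * (X ⊗ₖ (1 : Matrix M M ℂ))) = ptraceRight A * X := by
  ext i j
  simp only [ptraceRight_apply, Matrix.mul_apply, kroneckerMap_apply, Fintype.sum_prod_type]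
  have h : ∀ (k0 : M) (a : N) (b : M), A (i,k0) (a,b) * (X a j * (1:Matrix M M ℂ) b k0)
      = if b = k0 then A (i,k0) (a,b) * X a j else 0 := by
    intro k0 a b
    by_cases hb : b = k0
    · subst hb; simp [Matrix.one_apply]
    · simp [Matrix.one_apply, Ne.symm hb, hb]
  simp_rw [h]
  simp only [Finset.sum_ite_eq', Finset.mem_univ, if_true]
  rw [Finset.sum_comm]
  refine Finset.sum_congr rfl fun a _ => ?_
  rw [Finset.sum_mul]

lemma ptraceRight_kron (X : Matrix N N ℂ) (τ : Matrix M M ℂ) :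
    ptraceRight (X ⊗ₖ τ) = τ.trace • X := by
  ext i j
  simp only [ptraceRight_apply, kroneckerMap_apply, Matrix.smul_apply, Matrix.trace, diag,
    smul_eq_mul]
  rw [Finset.sum_mul]
  refine Finset.sum_congr rfl fun k0 _ => mul_comm _ _

lemma kron_conjTranspose (X : Matrix N N ℂ) (Y : Matrix M M ℂ) :
    (X ⊗ₖ Y)ᴴ = Xᴴ ⊗ₖ Yᴴ := by
  ext p q
  cases p with | mk a b =>
  cases q with | mk c d =>
  simp [conjTranspose_apply, kroneckerMap_apply]

lemma kron_psd {X : Matrix N N ℂ} {Y : Matrix M M ℂ}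
    (hX : X.PosSemidef) (hY : Y.PosSemidef) : (X ⊗ₖ Y).PosSemidef := by
  have h1 : ((posSemidefSqrt hX) ⊗ₖ (posSemidefSqrt hY))ᴴ * ((posSemidefSqrt hX) ⊗ₖ (posSemidefSqrt hY)) = X ⊗ₖ Y := by
    rw [kron_conjTranspose, hX.posSemidef_sqrt.1.eq, hY.posSemidef_sqrt.1.eq,
      ← Matrix.mul_kronecker_mul, hX.sqrt_mul_self, hY.sqrt_mul_self]
  rw [← h1]
  exact posSemidef_conjTranspose_mul_self _






/-- big vector in Euclidean space -/
def bigvec (F : Matrix (N × M) (N × M) ℂ) (u : N → ℂ) : EuclideanSpace ℂ ((N × M) × M) :=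
  WithLp.toLp 2 (fun p => (F *ᵥ emb u p.2) p.1)

lemma bigvec_inner (F₂ F₁ : Matrix (N × M) (N × M) ℂ) (u w : N → ℂ) :
    (inner ℂ (bigvec F₂ u) (bigvec F₁ w)) = star u ⬝ᵥ (ptraceRight (F₂ᴴ * F₁)) *ᵥ w := by
  rw [← dot_emb]
  rw [PiLp.inner_apply]
  simp only [RCLike.inner_apply]
  rw [Fintype.sum_prod_type]
  rw [Finset.sum_comm]
  refine Finset.sum_congr rfl fun k0 _ => ?_
  rw [← dot_mulVec_mulVec]
  rw [dotProduct]
  exact Finset.sum_congr rfl fun x _ => mul_comm _ _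

lemma cs_ptrace (F₂ F₁ : Matrix (N × M) (N × M) ℂ) (a b : N → ℂ) :
    ‖star a ⬝ᵥ (ptraceRight (F₂ᴴ * F₁)) *ᵥ b‖ ^ 2 ≤
      (star a ⬝ᵥ (ptraceRight (F₂ᴴ * F₂)) *ᵥ a).re
        * (star b ⬝ᵥ (ptraceRight (F₁ᴴ * F₁)) *ᵥ b).re := by
  set x := bigvec F₂ a with hx
  set y := bigvec F₁ b with hy
  have hxy : (inner ℂ x y) = star a ⬝ᵥ (ptraceRight (F₂ᴴ * F₁)) *ᵥ b :=
    bigvec_inner F₂ F₁ a b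
  have hxx : ‖x‖ ^ 2 = (star a ⬝ᵥ (ptraceRight (F₂ᴴ * F₂)) *ᵥ a).re := by
    rw [norm_sq_eq_re_inner (𝕜 := ℂ), bigvec_inner]
    rfl
  have hyy : ‖y‖ ^ 2 = (star b ⬝ᵥ (ptraceRight (F₁ᴴ * F₁)) *ᵥ b).re := by
    rw [norm_sq_eq_re_inner (𝕜 := ℂ), bigvec_inner]
    rfl
  rw [← hxy, ← hxx, ← hyy]
  calc ‖(inner ℂ x y)‖ ^ 2 ≤ (‖x‖ * ‖y‖) ^ 2 := by
        have h := norm_inner_le_norm (𝕜 := ℂ) x y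
        have h0 : 0 ≤ ‖(inner ℂ x y)‖ := norm_nonneg _
        nlinarith
    _ = ‖x‖ ^ 2 * ‖y‖ ^ 2 := by ring


lemma ptraceRight_zero : ptraceRight (0 : Matrix (N × M) (N × M) ℂ) = 0 := by
  ext i j
  simp [ptraceRight_apply]

lemma dot_self_norm (u : k → ℂ) : ‖star u ⬝ᵥ u‖ = (star u ⬝ᵥ u).re := by
  rw [dot_self_real]
  rw [Complex.norm_real, Complex.ofReal_re]
  exact abs_of_nonneg (Finset.sum_nonneg fun i _ => Complex.normSq_nonneg _)

lemma mul_left_apply {A B C Z : Matrix k k ℂ} (h : A * B = C) : A * (B * Z) = C * Z := by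
  rw [← Matrix.mul_assoc, h]

end Stmt5Aux

set_option maxHeartbeats 1000000 in
/-- Fidelity-preserving extension: given densities `ρ₁, ρ₂` and an extension `σ₁`
of `ρ₁`, there is an extension `σ₂` of `ρ₂` with `F(ρ₁,ρ₂) = F(σ₁,σ₂)`. -/
theorem stmt5 {n m : ℕ} (ρ₁ ρ₂ : Matrix (Fin n) (Fin n) ℂ)
    (σ₁ : Matrix (Fin n × Fin m) (Fin n × Fin m) ℂ)
    (hρ₁ : IsDensity ρ₁) (hρ₂ : IsDensity ρ₂) (hσ₁ : IsDensity σ₁)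
    (hp₁ : ptraceRight σ₁ = ρ₁) :
    ∃ σ₂ : Matrix (Fin n × Fin m) (Fin n × Fin m) ℂ,
      IsDensity σ₂ ∧ ptraceRight σ₂ = ρ₂ ∧ fidelity ρ₁ ρ₂ = fidelity σ₁ σ₂ := by
  classical
  have hnem : Nonempty (Fin n × Fin m) := by
    by_contra hno
    have h0 : σ₁.trace = 0 := by
      rw [Matrix.trace, Finset.univ_eq_empty_iff.mpr (not_nonempty_iff.mp hno), Finset.sum_empty]
    rw [hσ₁.2] at h0
    exact one_ne_zero h0
  obtain ⟨⟨i0, k0⟩⟩ := hnem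
  obtain ⟨hρ₁p, hρ₁t⟩ := hρ₁
  obtain ⟨hρ₂p, hρ₂t⟩ := hρ₂
  obtain ⟨hσ₁p, hσ₁t⟩ := hσ₁
  obtain ⟨B₁, hB₁def⟩ : ∃ x, x = (posSemidefSqrt hρ₁p) := ⟨_, rfl⟩
  obtain ⟨B₂, hB₂def⟩ : ∃ x, x = (posSemidefSqrt hρ₂p) := ⟨_, rfl⟩
  obtain ⟨S₁, hS₁def⟩ : ∃ x, x = (posSemidefSqrt hσ₁p) := ⟨_, rfl⟩
  have hB₁psd : B₁.PosSemidef := by rw [hB₁def]; exact hρ₁p.posSemidef_sqrt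
  have hB₂psd : B₂.PosSemidef := by rw [hB₂def]; exact hρ₂p.posSemidef_sqrt
  have hS₁psd : S₁.PosSemidef := by rw [hS₁def]; exact hσ₁p.posSemidef_sqrt
  have hB₁h : B₁ᴴ = B₁ := hB₁psd.1
  have hB₂h : B₂ᴴ = B₂ := hB₂psd.1
  have hS₁h : S₁ᴴ = S₁ := hS₁psd.1
  have hB₁sq : B₁ * B₁ = ρ₁ := by rw [hB₁def]; exact hρ₁p.sqrt_mul_self
  have hB₂sq : B₂ * B₂ = ρ₂ := by rw [hB₂def]; exact hρ₂p.sqrt_mul_self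
  have hS₁sq : S₁ * S₁ = σ₁ := by rw [hS₁def]; exact hσ₁p.sqrt_mul_self
  obtain ⟨B₁p, Pr₁, hB₁ph, hB₁pB, hBB₁p, hPr₁B, hPr₁h, hPr₁idem, hPr₁c⟩ :=
    Stmt5Aux.exists_pinv hB₁psd
  obtain ⟨B₂p, Pr₂, hB₂ph, hB₂pB, hBB₂p, hPr₂B, hPr₂h, hPr₂idem, hPr₂c⟩ :=
    Stmt5Aux.exists_pinv hB₂psd
  have hBPr₁ : B₁ * Pr₁ = B₁ := by
    have := congrArg Matrix.conjTranspose hPr₁B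
    rwa [Matrix.conjTranspose_mul, hPr₁h, hB₁h] at this
  have hBPr₂ : B₂ * Pr₂ = B₂ := by
    have := congrArg Matrix.conjTranspose hPr₂B
    rwa [Matrix.conjTranspose_mul, hPr₂h, hB₂h] at this
  obtain ⟨U₀, hU₀1, hU₀2, hU₀3, hU₀4⟩ := Stmt5Aux.polar_decomp (B₂ * B₁)
  obtain ⟨P, hPdef⟩ : ∃ x, x = (posSemidefSqrt (posSemidef_conjTranspose_mul_self (B₂ * B₁))) := ⟨_, rfl⟩
  rw [← hPdef] at hU₀1 hU₀2
  have hPpsd : P.PosSemidef := by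
    rw [hPdef]; exact (posSemidef_conjTranspose_mul_self (B₂ * B₁)).posSemidef_sqrt
  have hPh : Pᴴ = P := hPpsd.1
  have hA₀H : B₁ * B₂ = P * U₀ᴴ := by
    have := congrArg Matrix.conjTranspose hU₀1
    rwa [Matrix.conjTranspose_mul, Matrix.conjTranspose_mul, hB₁h, hB₂h, hPh] at this
  obtain ⟨X, hXdef⟩ : ∃ x, x = B₂ * U₀ * B₁p := ⟨_, rfl⟩
  have hXH : Xᴴ = B₁p * U₀ᴴ * B₂ := by
    rw [hXdef, Matrix.conjTranspose_mul, Matrix.conjTranspose_mul, hB₁ph, hB₂h]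
    simp only [Matrix.mul_assoc]
  have hXρX : X * ρ₁ * Xᴴ = B₂ * (U₀ * Pr₁ * U₀ᴴ) * B₂ := by
    rw [hXH, hXdef, ← hB₁sq]
    simp only [Matrix.mul_assoc]
    rw [Stmt5Aux.mul_left_apply hB₁pB, Stmt5Aux.mul_left_apply hPr₁B,
      Stmt5Aux.mul_left_apply hBB₁p]
  obtain ⟨τ, hτdef⟩ :
      ∃ x, x = (diagonal (fun j => if j = k0 then (1:ℂ) else 0) : Matrix (Fin m) (Fin m) ℂ) :=
    ⟨_, rfl⟩
  have hτpsd : τ.PosSemidef := by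
    rw [hτdef]
    refine posSemidef_diagonal_iff.mpr fun i => ?_
    split_ifs <;> simp
  have hτtr : τ.trace = 1 := by
    rw [hτdef, Matrix.trace_diagonal]
    simp
  obtain ⟨Δ, hΔdef⟩ : ∃ x, x = ρ₂ - X * ρ₁ * Xᴴ := ⟨_, rfl⟩
  have hΔpsd : Δ.PosSemidef := by
    have hmid : (1 - U₀ * Pr₁ * U₀ᴴ).PosSemidef := by
      have e1 : 1 - U₀ * Pr₁ * U₀ᴴ = (1 - U₀ * U₀ᴴ) + U₀ * (1 - Pr₁) * U₀ᴴ := by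
        rw [Matrix.mul_sub, Matrix.sub_mul, Matrix.mul_one]
        abel
      rw [e1]
      exact hU₀4.add (hPr₁c.mul_mul_conjTranspose_same U₀)
    have h1 : Δ = B₂ * (1 - U₀ * Pr₁ * U₀ᴴ) * B₂ := by
      rw [hΔdef, hXρX, Matrix.mul_sub, Matrix.sub_mul, Matrix.mul_one, hB₂sq]
    rw [h1]
    have := hmid.mul_mul_conjTranspose_same B₂
    rwa [hB₂h] at this
  obtain ⟨Y, hYdef⟩ : ∃ x, x = X ⊗ₖ (1 : Matrix (Fin m) (Fin m) ℂ) := ⟨_, rfl⟩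
  have hYH : Yᴴ = Xᴴ ⊗ₖ (1 : Matrix (Fin m) (Fin m) ℂ) := by
    rw [hYdef, Stmt5Aux.kron_conjTranspose, Matrix.conjTranspose_one]
  obtain ⟨σ₂, hσ₂def⟩ : ∃ x, x = Y * σ₁ * Yᴴ + Δ ⊗ₖ τ := ⟨_, rfl⟩
  have hptσ₂ : ptraceRight σ₂ = ρ₂ := by
    rw [hσ₂def, Stmt5Aux.ptraceRight_add]
    have h1 : ptraceRight (Y * σ₁ * Yᴴ) = X * (ρ₁ * Xᴴ) := by
      rw [hYH, hYdef, Matrix.mul_assoc, Stmt5Aux.ptraceRight_kron_left,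
        Stmt5Aux.ptraceRight_kron_right, hp₁]
    have h2 : ptraceRight (Δ ⊗ₖ τ) = Δ := by
      rw [Stmt5Aux.ptraceRight_kron, hτtr, one_smul]
    rw [h1, h2, hΔdef, ← Matrix.mul_assoc]
    abel
  have hσ₂psd : σ₂.PosSemidef := by
    rw [hσ₂def]
    exact (hσ₁p.mul_mul_conjTranspose_same Y).add (Stmt5Aux.kron_psd hΔpsd hτpsd)
  have hσ₂tr : σ₂.trace = 1 := by
    rw [← Stmt5Aux.ptraceRight_trace, hptσ₂, hρ₂t]
  -- trace identity
  have htrXρ₁ : (X * ρ₁).trace = P.trace := by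
    have h1 : X * ρ₁ = B₂ * (U₀ * B₁) := by
      rw [hXdef, ← hB₁sq]
      simp only [Matrix.mul_assoc]
      rw [Stmt5Aux.mul_left_apply hB₁pB, hPr₁B]
    have h3 : (U₀ * B₁) * B₂ = U₀ * (P * U₀ᴴ) := by rw [Matrix.mul_assoc, hA₀H]
    have h7 : (U₀ᴴ * U₀) * P = P := by rw [Matrix.mul_assoc] at hU₀2 ⊢; exact hU₀2
    calc (X * ρ₁).trace = (B₂ * (U₀ * B₁)).trace := by rw [h1]
      _ = ((U₀ * B₁) * B₂).trace := Matrix.trace_mul_comm _ _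
      _ = (U₀ * (P * U₀ᴴ)).trace := by rw [h3]
      _ = ((P * U₀ᴴ) * U₀).trace := Matrix.trace_mul_comm _ _
      _ = (P * (U₀ᴴ * U₀)).trace := by rw [Matrix.mul_assoc]
      _ = ((U₀ᴴ * U₀) * P).trace := Matrix.trace_mul_comm _ _
      _ = P.trace := by rw [h7]
  -- fidelity ρ₁ ρ₂ = Re tr P
  have hmsqρ₁ : msqrt ρ₁ = B₁ := by rw [hB₁def]; unfold msqrt; rw [dif_pos hρ₁p]
  have hmsqρ₂ : msqrt ρ₂ = B₂ := by rw [hB₂def]; unfold msqrt; rw [dif_pos hρ₂p]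
  have hF12 : fidelity ρ₁ ρ₂ = P.trace.re := by
    rw [fidelity, hmsqρ₁, hmsqρ₂, traceNorm, Stmt5Aux.trace_sqrt_comm]
    have hee : (B₁ * B₂) * (B₁ * B₂)ᴴ = (B₂ * B₁)ᴴ * (B₂ * B₁) := by
      simp only [Matrix.conjTranspose_mul, hB₁h, hB₂h, Matrix.mul_assoc]
    rw [Stmt5Aux.sqrt_congr (posSemidef_self_mul_conjTranspose (B₁ * B₂))
      (posSemidef_conjTranspose_mul_self (B₂ * B₁)) hee, ← hPdef]
  -- σ₂ square root
  obtain ⟨S₂, hS₂def⟩ : ∃ x, x = (posSemidefSqrt hσ₂psd) := ⟨_, rfl⟩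
  have hS₂psd : S₂.PosSemidef := by rw [hS₂def]; exact hσ₂psd.posSemidef_sqrt
  have hS₂h : S₂ᴴ = S₂ := hS₂psd.1
  have hS₂sq : S₂ * S₂ = σ₂ := by rw [hS₂def]; exact hσ₂psd.sqrt_mul_self
  have hmsqσ₁ : msqrt σ₁ = S₁ := by rw [hS₁def]; unfold msqrt; rw [dif_pos hσ₁p]
  have hmsqσ₂ : msqrt σ₂ = S₂ := by rw [hS₂def]; unfold msqrt; rw [dif_pos hσ₂psd]
  have hFσdef : fidelity σ₁ σ₂
      = (posSemidefSqrt (posSemidef_conjTranspose_mul_self (S₁ * S₂))).trace.re := by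
    rw [fidelity, hmsqσ₁, hmsqσ₂, traceNorm]
  -- common form : tr sqrt (S₁ σ₂ S₁)
  have hTT : (S₁ * S₂) * (S₁ * S₂)ᴴ = S₁ * σ₂ * S₁ := by
    rw [Matrix.conjTranspose_mul, hS₁h, hS₂h]
    simp only [Matrix.mul_assoc]
    rw [Stmt5Aux.mul_left_apply hS₂sq]
  have hSσS : (S₁ * σ₂ * S₁).PosSemidef := by
    have := hσ₂psd.mul_mul_conjTranspose_same S₁
    rwa [hS₁h] at this
  have hFσ : fidelity σ₁ σ₂ = (posSemidefSqrt hSσS).trace.re := by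
    rw [hFσdef, Stmt5Aux.trace_sqrt_comm,
      Stmt5Aux.sqrt_congr (posSemidef_self_mul_conjTranspose (S₁ * S₂)) hSσS hTT]
  ---------------------------------------------------------------------------
  -- LOWER BOUND : P.trace.re ≤ fidelity σ₁ σ₂
  ---------------------------------------------------------------------------
  have hlower : P.trace.re ≤ fidelity σ₁ σ₂ := by
    obtain ⟨Mm, hMmdef⟩ : ∃ x, x = S₁ * Y * S₁ := ⟨_, rfl⟩
    have hMmH : Mmᴴ = S₁ * Yᴴ * S₁ := by
      rw [hMmdef, Matrix.conjTranspose_mul, Matrix.conjTranspose_mul, hS₁h]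
      simp only [Matrix.mul_assoc]
    have hdecomp : S₁ * σ₂ * S₁ = Mm * Mmᴴ + S₁ * (Δ ⊗ₖ τ) * S₁ := by
      have h1 : Mm * Mmᴴ = S₁ * (Y * σ₁ * Yᴴ) * S₁ := by
        rw [hMmH, hMmdef, ← hS₁sq]
        simp only [Matrix.mul_assoc]
      rw [h1, hσ₂def, Matrix.mul_add, Matrix.add_mul]
    have hMMpsd : (Mm * Mmᴴ).PosSemidef := posSemidef_self_mul_conjTranspose Mm
    have hRpsd : (S₁ * (Δ ⊗ₖ τ) * S₁).PosSemidef := by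
      have := (Stmt5Aux.kron_psd hΔpsd hτpsd).mul_mul_conjTranspose_same S₁
      rwa [hS₁h] at this
    have hdiffpsd : ((S₁ * σ₂ * S₁) - Mm * Mmᴴ).PosSemidef := by
      rw [hdecomp, add_sub_cancel_left]
      exact hRpsd
    have step1 : (posSemidefSqrt hMMpsd).trace.re ≤ (posSemidefSqrt hSσS).trace.re :=
      Stmt5Aux.trace_sqrt_le hMMpsd hSσS hdiffpsd
    have step2 : traceNorm Mm = (posSemidefSqrt hMMpsd).trace.re := by
      rw [traceNorm, Stmt5Aux.trace_sqrt_comm,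
        Stmt5Aux.sqrt_congr (posSemidef_self_mul_conjTranspose Mm) hMMpsd rfl]
    have step3 : Mm.trace.re ≤ traceNorm Mm := Stmt5Aux.re_trace_le_traceNorm Mm
    have step4 : Mm.trace = P.trace := by
      have h1 : (S₁ * Y * S₁).trace = (S₁ * S₁ * Y).trace := Matrix.trace_mul_cycle _ _ _
      have h2 : (Y * σ₁).trace = (X * ρ₁).trace := by
        rw [← Stmt5Aux.ptraceRight_trace (Y * σ₁), hYdef,
          Stmt5Aux.ptraceRight_kron_left, hp₁]
      rw [hMmdef, h1, hS₁sq, Matrix.trace_mul_comm, h2, htrXρ₁]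
    rw [hFσ, ← step4]
    calc Mm.trace.re ≤ traceNorm Mm := step3
      _ = (posSemidefSqrt hMMpsd).trace.re := step2
      _ ≤ (posSemidefSqrt hSσS).trace.re := step1
  ---------------------------------------------------------------------------
  -- UPPER BOUND : fidelity σ₁ σ₂ ≤ P.trace.re
  ---------------------------------------------------------------------------
  have hupper : fidelity σ₁ σ₂ ≤ P.trace.re := by
    obtain ⟨U, hU1, hU2, hU3, hU4⟩ := Stmt5Aux.polar_decomp (S₁ * S₂)
    obtain ⟨RT, hRTdef⟩ : ∃ x, x = (posSemidefSqrt (posSemidef_conjTranspose_mul_self (S₁ * S₂))) :=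
      ⟨_, rfl⟩
    rw [← hRTdef] at hU1 hU2
    have hRTtr : RT.trace = (S₂ * (Uᴴ * S₁)).trace := by
      have h1 : Uᴴ * (S₁ * S₂) = RT := by
        rw [hU1, ← Matrix.mul_assoc, hU2]
      rw [← h1, ← Matrix.mul_assoc, Matrix.trace_mul_comm]
    obtain ⟨G, hGdef⟩ : ∃ x, x = ptraceRight (S₂ * (Uᴴ * S₁)) := ⟨_, rfl⟩
    have hGtr : G.trace = RT.trace := by
      rw [hGdef, Stmt5Aux.ptraceRight_trace, hRTtr]
    -- Pr₂ * G = G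
    obtain ⟨J2, hJ2def⟩ :
        ∃ x, x = (1 - Pr₂) ⊗ₖ (1 : Matrix (Fin m) (Fin m) ℂ) := ⟨_, rfl⟩
    have hJ2h : J2ᴴ = J2 := by
      rw [hJ2def, Stmt5Aux.kron_conjTranspose, Matrix.conjTranspose_one,
        Matrix.conjTranspose_sub, Matrix.conjTranspose_one, hPr₂h]
    have hρ₂Pr : ρ₂ * (1 - Pr₂) = 0 := by
      rw [Matrix.mul_sub, Matrix.mul_one, ← hB₂sq, Matrix.mul_assoc, hBPr₂, sub_self]
    have hJ2S₂ : J2 * S₂ = 0 := by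
      have hpt : ptraceRight (J2 * σ₂ * J2ᴴ) = 0 := by
        rw [hJ2h, hJ2def, Matrix.mul_assoc, Stmt5Aux.ptraceRight_kron_left,
          Stmt5Aux.ptraceRight_kron_right, hptσ₂, hρ₂Pr, Matrix.mul_zero]
      have htr0 : (J2 * σ₂ * J2ᴴ).trace = 0 := by
        rw [← Stmt5Aux.ptraceRight_trace, hpt, Matrix.trace_zero]
      have hzero : J2 * σ₂ * J2ᴴ = 0 :=
        Stmt5Aux.psd_trace_re_zero (hσ₂psd.mul_mul_conjTranspose_same J2)
          (by rw [htr0]; rfl)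
      have h5 : (J2 * S₂) * (J2 * S₂)ᴴ = 0 := by
        rw [Matrix.conjTranspose_mul, hJ2h, hS₂h]
        calc J2 * S₂ * (S₂ * J2) = J2 * (S₂ * S₂) * J2 := by simp only [Matrix.mul_assoc]
          _ = J2 * σ₂ * J2ᴴ := by rw [hS₂sq, hJ2h]
          _ = 0 := hzero
      exact Matrix.self_mul_conjTranspose_eq_zero.mp h5
    have hPr2G : Pr₂ * G = G := by
      have h2 : (1 - Pr₂) * G = 0 := by
        rw [hGdef, ← Stmt5Aux.ptraceRight_kron_left]
        have hz : ((1 - Pr₂) ⊗ₖ (1 : Matrix (Fin m) (Fin m) ℂ)) * (S₂ * (Uᴴ * S₁)) = 0 := by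
          rw [← hJ2def, ← Matrix.mul_assoc, hJ2S₂, Matrix.zero_mul]
        rw [hz, Stmt5Aux.ptraceRight_zero]
      rw [Matrix.sub_mul, Matrix.one_mul] at h2
      exact (sub_eq_zero.mp h2).symm
    -- G * Pr₁ = G
    obtain ⟨J1, hJ1def⟩ :
        ∃ x, x = (1 - Pr₁) ⊗ₖ (1 : Matrix (Fin m) (Fin m) ℂ) := ⟨_, rfl⟩
    have hJ1h : J1ᴴ = J1 := by
      rw [hJ1def, Stmt5Aux.kron_conjTranspose, Matrix.conjTranspose_one,
        Matrix.conjTranspose_sub, Matrix.conjTranspose_one, hPr₁h]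
    have hρ₁Pr : ρ₁ * (1 - Pr₁) = 0 := by
      rw [Matrix.mul_sub, Matrix.mul_one, ← hB₁sq, Matrix.mul_assoc, hBPr₁, sub_self]
    have hJ1S₁ : J1 * S₁ = 0 := by
      have hpt : ptraceRight (J1 * σ₁ * J1ᴴ) = 0 := by
        rw [hJ1h, hJ1def, Matrix.mul_assoc, Stmt5Aux.ptraceRight_kron_left,
          Stmt5Aux.ptraceRight_kron_right, hp₁, hρ₁Pr, Matrix.mul_zero]
      have htr0 : (J1 * σ₁ * J1ᴴ).trace = 0 := by
        rw [← Stmt5Aux.ptraceRight_trace, hpt, Matrix.trace_zero]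
      have hzero : J1 * σ₁ * J1ᴴ = 0 :=
        Stmt5Aux.psd_trace_re_zero (hσ₁p.mul_mul_conjTranspose_same J1)
          (by rw [htr0]; rfl)
      have h5 : (J1 * S₁) * (J1 * S₁)ᴴ = 0 := by
        rw [Matrix.conjTranspose_mul, hJ1h, hS₁h]
        calc J1 * S₁ * (S₁ * J1) = J1 * (S₁ * S₁) * J1 := by simp only [Matrix.mul_assoc]
          _ = J1 * σ₁ * J1ᴴ := by rw [hS₁sq, hJ1h]
          _ = 0 := hzero
      exact Matrix.self_mul_conjTranspose_eq_zero.mp h5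
    have hS₁J1 : S₁ * J1 = 0 := by
      have := congrArg Matrix.conjTranspose hJ1S₁
      rwa [Matrix.conjTranspose_mul, hJ1h, hS₁h, Matrix.conjTranspose_zero] at this
    have hGPr1 : G * Pr₁ = G := by
      have h2 : G * (1 - Pr₁) = 0 := by
        rw [hGdef, ← Stmt5Aux.ptraceRight_kron_right]
        have hz : (S₂ * (Uᴴ * S₁)) * ((1 - Pr₁) ⊗ₖ (1 : Matrix (Fin m) (Fin m) ℂ)) = 0 := by
          rw [← hJ1def]
          simp only [Matrix.mul_assoc]
          rw [hS₁J1]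
          simp
        rw [hz, Stmt5Aux.ptraceRight_zero]
      rw [Matrix.mul_sub, Matrix.mul_one] at h2
      exact (sub_eq_zero.mp h2).symm
    obtain ⟨C, hCdef⟩ : ∃ x, x = B₂p * G * B₁p := ⟨_, rfl⟩
    have hGBCB : B₂ * C * B₁ = G := by
      calc B₂ * C * B₁ = (B₂ * B₂p) * (G * (B₁p * B₁)) := by
            rw [hCdef]; simp only [Matrix.mul_assoc]
        _ = Pr₂ * (G * Pr₁) := by rw [hBB₂p, hB₁pB]
        _ = Pr₂ * G := by rw [hGPr1]
        _ = G := hPr2G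
    have hBpρBp₂ : B₂p * (ρ₂ * B₂p) = Pr₂ := by
      rw [← hB₂sq, Matrix.mul_assoc B₂ B₂ B₂p, Stmt5Aux.mul_left_apply hB₂pB, hBB₂p,
        hPr₂idem]
    have hBpρBp₁ : B₁p * (ρ₁ * B₁p) = Pr₁ := by
      rw [← hB₁sq, Matrix.mul_assoc B₁ B₁ B₁p, Stmt5Aux.mul_left_apply hB₁pB, hBB₁p,
        hPr₁idem]
    -- Cauchy-Schwarz contraction bound
    have hCcs : ∀ v w : Fin n → ℂ, ‖star v ⬝ᵥ C *ᵥ w‖ ^ 2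
        ≤ (star v ⬝ᵥ v).re * (star w ⬝ᵥ w).re := by
      intro v w
      obtain ⟨a, hadef⟩ : ∃ x, x = B₂p *ᵥ v := ⟨_, rfl⟩
      obtain ⟨b, hbdef⟩ : ∃ x, x = B₁p *ᵥ w := ⟨_, rfl⟩
      have hsplit : star a ⬝ᵥ G *ᵥ b = star v ⬝ᵥ C *ᵥ w := by
        rw [hadef, hbdef, Matrix.mulVec_mulVec, Stmt5Aux.dot_mulVec_mulVec, hB₂ph, hCdef,
          ← Matrix.mul_assoc]
      have hGform : G = ptraceRight (S₂ᴴ * (Uᴴ * S₁)) := by rw [hGdef, hS₂h]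
      have hcs := Stmt5Aux.cs_ptrace S₂ (Uᴴ * S₁) a b
      rw [← hGform] at hcs
      have hf1 : (star a ⬝ᵥ (ptraceRight (S₂ᴴ * S₂)) *ᵥ a).re ≤ (star v ⬝ᵥ v).re := by
        have e1 : ptraceRight (S₂ᴴ * S₂) = ρ₂ := by
          rw [hS₂h, hS₂sq, hptσ₂]
        rw [e1]
        have e2 : star a ⬝ᵥ ρ₂ *ᵥ a = star v ⬝ᵥ Pr₂ *ᵥ v := by
          rw [hadef, Matrix.mulVec_mulVec, Stmt5Aux.dot_mulVec_mulVec, hB₂ph, hBpρBp₂]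
        rw [e2]
        exact Stmt5Aux.re_dot_le_of_psd_sub hPr₂c v
      have hf2 : (star b ⬝ᵥ (ptraceRight ((Uᴴ * S₁)ᴴ * (Uᴴ * S₁))) *ᵥ b).re
          ≤ (star w ⬝ᵥ w).re := by
        have e3 : ((Uᴴ * S₁)ᴴ * (Uᴴ * S₁)) = S₁ * (U * Uᴴ) * S₁ := by
          rw [Matrix.conjTranspose_mul, Matrix.conjTranspose_conjTranspose, hS₁h]
          simp only [Matrix.mul_assoc]
        have hdpsd : (σ₁ - S₁ * (U * Uᴴ) * S₁).PosSemidef := by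
          have e4 : σ₁ - S₁ * (U * Uᴴ) * S₁ = S₁ * (1 - U * Uᴴ) * S₁ := by
            rw [Matrix.mul_sub, Matrix.sub_mul, Matrix.mul_one, hS₁sq]
          rw [e4]
          have := hU4.mul_mul_conjTranspose_same S₁
          rwa [hS₁h] at this
        have hptd : ((ptraceRight σ₁) - ptraceRight (S₁ * (U * Uᴴ) * S₁)).PosSemidef := by
          rw [← Stmt5Aux.ptraceRight_sub]
          exact Stmt5Aux.ptraceRight_psd hdpsd
        rw [hp₁] at hptd
        have step := Stmt5Aux.re_dot_mono hptd b
        have e5 : star b ⬝ᵥ ρ₁ *ᵥ b = star w ⬝ᵥ Pr₁ *ᵥ w := by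
          rw [hbdef, Matrix.mulVec_mulVec, Stmt5Aux.dot_mulVec_mulVec, hB₁ph, hBpρBp₁]
        rw [e3]
        calc (star b ⬝ᵥ (ptraceRight (S₁ * (U * Uᴴ) * S₁)) *ᵥ b).re
            ≤ (star b ⬝ᵥ ρ₁ *ᵥ b).re := step
          _ = (star w ⬝ᵥ Pr₁ *ᵥ w).re := by rw [e5]
          _ ≤ (star w ⬝ᵥ w).re := Stmt5Aux.re_dot_le_of_psd_sub hPr₁c w
      have hnn1 : 0 ≤ (star b ⬝ᵥ (ptraceRight ((Uᴴ * S₁)ᴴ * (Uᴴ * S₁))) *ᵥ b).re :=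
        (Stmt5Aux.ptraceRight_psd
          (posSemidef_conjTranspose_mul_self (Uᴴ * S₁))).re_dotProduct_nonneg b
      have hnn2 : 0 ≤ (star v ⬝ᵥ v).re := Stmt5Aux.dot_self_re_nonneg v
      rw [← hsplit]
      calc ‖star a ⬝ᵥ G *ᵥ b‖ ^ 2
          ≤ (star a ⬝ᵥ (ptraceRight (S₂ᴴ * S₂)) *ᵥ a).re
            * (star b ⬝ᵥ (ptraceRight ((Uᴴ * S₁)ᴴ * (Uᴴ * S₁))) *ᵥ b).re := hcs
        _ ≤ (star v ⬝ᵥ v).re * (star w ⬝ᵥ w).re := mul_le_mul hf1 hf2 hnn1 hnn2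
    -- pointwise contraction of C
    have hCc : ∀ u : Fin n → ℂ, (star (C *ᵥ u) ⬝ᵥ (C *ᵥ u)).re ≤ (star u ⬝ᵥ u).re := by
      intro u
      obtain ⟨z, hzdef⟩ : ∃ x, x = C *ᵥ u := ⟨_, rfl⟩
      rw [← hzdef]
      have hx0 : 0 ≤ (star z ⬝ᵥ z).re := Stmt5Aux.dot_self_re_nonneg z
      have hy0 : 0 ≤ (star u ⬝ᵥ u).re := Stmt5Aux.dot_self_re_nonneg u
      have h1 := hCcs z u
      rw [← hzdef] at h1
      rw [Stmt5Aux.dot_self_norm z] at h1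
      rcases eq_or_lt_of_le hx0 with h | h
      · rw [← h]; exact hy0
      · nlinarith
    have hU₀c : ∀ z : Fin n → ℂ,
        (star (U₀ᴴ *ᵥ z) ⬝ᵥ (U₀ᴴ *ᵥ z)).re ≤ (star z ⬝ᵥ z).re := by
      intro z
      rw [Stmt5Aux.dot_mulVec_mulVec, Matrix.conjTranspose_conjTranspose]
      exact Stmt5Aux.re_dot_le_of_psd_sub hU₀4 z
    have hKc : ∀ u : Fin n → ℂ,
        (star ((U₀ᴴ * C) *ᵥ u) ⬝ᵥ ((U₀ᴴ * C) *ᵥ u)).re ≤ (star u ⬝ᵥ u).re := by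
      intro u
      rw [← Matrix.mulVec_mulVec]
      exact le_trans (hU₀c (C *ᵥ u)) (hCc u)
    have hGCP : G.trace = ((U₀ᴴ * C) * P).trace := by
      have h3 : (B₁ * B₂) * C = P * (U₀ᴴ * C) := by rw [hA₀H, Matrix.mul_assoc]
      calc G.trace = (B₂ * C * B₁).trace := by rw [hGBCB]
        _ = ((B₁ * B₂) * C).trace := by rw [Matrix.trace_mul_cycle B₂ C B₁]
        _ = (P * (U₀ᴴ * C)).trace := by rw [h3]
        _ = ((U₀ᴴ * C) * P).trace := Matrix.trace_mul_comm _ _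
    rw [hFσdef, ← hRTdef, ← hGtr, hGCP]
    exact Stmt5Aux.re_trace_contraction_mul hPpsd hKc
  refine ⟨σ₂, ⟨hσ₂psd, hσ₂tr⟩, hptσ₂, ?_⟩
  rw [hF12]
  exact (le_antisymm hupper hlower).symm
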